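/- Let n ≥ 2 and let a_1, …, a_n be complex numbers with ∏_{i=1}^n a_i = 1, and let p(X) = ∏_{i=1}^n (X − a_i). Define the discriminant disc(p) = ∏_{1 ≤ i < j ≤ n} (a_i − a_j)^2. Then (1/(n−1))·√(2/n)·max{0, log|n^{−n}·disc(p)|} ≤ ℓ(p). -/

import Mathlib

open Matrix in
lemma trace_eq_sum_eigen {n : ℕ} {A : Matrix (Fin n) (Fin n) ℂ} (hA : A.IsHermitian) :
    A.trace = ∑ i, (hA.eigenvalues i : ℂ) := by
  exact hA.trace_eq_sum_eigenvalues

open Matrix ComplexOrder in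
lemma hadamard_sq {n : ℕ} (A : Matrix (Fin n) (Fin n) ℂ) :
    ‖A.det‖ ^ 2 ≤ ∏ j, ∑ i, ‖A i j‖ ^ 2 := by
  rcases Nat.eq_zero_or_pos n with h0 | hnpos
  · subst h0; simp [Matrix.det_fin_zero]
  set s : Fin n → ℝ := fun j => ∑ i, ‖A i j‖ ^ 2 with hs
  have hs0 : ∀ j, 0 ≤ s j := fun j => Finset.sum_nonneg fun i _ => sq_nonneg _
  by_cases hz : ∃ j, s j = 0
  · obtain ⟨j, hj⟩ := hz
    have hcol : ∀ i, A i j = 0 := by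
      intro i
      have := (Finset.sum_eq_zero_iff_of_nonneg
        (fun i _ => sq_nonneg (‖A i j‖))).mp hj i (Finset.mem_univ i)
      simpa using this
    have hdet : A.det = 0 := Matrix.det_eq_zero_of_column_eq_zero j hcol
    rw [hdet]
    simpa using Finset.prod_nonneg fun j _ => hs0 j
  push_neg at hz
  have hspos : ∀ j, 0 < s j := fun j => (hs0 j).lt_of_ne (Ne.symm (hz j))
  set d : Fin n → ℂ := fun j => (((Real.sqrt (s j))⁻¹ : ℝ) : ℂ) with hd
  set B := A * Matrix.diagonal d with hB
  have hBij : ∀ i j, B i j = A i j * d j := fun i j => Matrix.mul_diagonal ..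
  have habs_d : ∀ j, ‖d j‖ ^ 2 = (s j)⁻¹ := by
    intro j
    rw [hd]
    simp only [Complex.norm_real, Real.norm_eq_abs]
    rw [abs_of_nonneg (by positivity), inv_pow, Real.sq_sqrt (hs0 j)]
  have hBcol : ∀ j, ∑ i, ‖B i j‖ ^ 2 = 1 := by
    intro j
    have h1 : ∀ i, ‖B i j‖ ^ 2 = ‖A i j‖ ^ 2 * (s j)⁻¹ := by
      intro i; rw [hBij, norm_mul, mul_pow, habs_d]
    rw [Finset.sum_congr rfl fun i _ => h1 i, ← Finset.sum_mul]
    exact mul_inv_cancel₀ (hz j)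
  have hdB : ‖B.det‖ ^ 2 = ‖A.det‖ ^ 2 * (∏ j, s j)⁻¹ := by
    rw [hB, Matrix.det_mul, Matrix.det_diagonal, norm_mul, mul_pow]
    congr 1
    rw [norm_prod, ← Finset.prod_pow, ← Finset.prod_inv_distrib]
    exact Finset.prod_congr rfl fun j _ => habs_d j
  set P := Bᴴ * B with hP
  have hPsd : P.PosSemidef := Matrix.posSemidef_conjTranspose_mul_self B
  have hH : P.IsHermitian := hPsd.1
  have hlam0 : ∀ i, 0 ≤ hH.eigenvalues i := hPsd.eigenvalues_nonneg
  have hPdiag : ∀ j, P j j = ((1 : ℝ) : ℂ) := by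
    intro j
    rw [hP, Matrix.mul_apply]
    have h1 : ∀ i, Bᴴ j i * B i j = ((‖B i j‖ ^ 2 : ℝ) : ℂ) := by
      intro i
      rw [Matrix.conjTranspose_apply, Complex.star_def, ← Complex.normSq_eq_conj_mul_self,
        Complex.sq_norm]
    rw [Finset.sum_congr rfl fun i _ => h1 i, ← Complex.ofReal_sum, hBcol j]
  have htr : ∑ i, hH.eigenvalues i = (n : ℝ) := by
    have h1 : P.trace = ((n : ℝ) : ℂ) := by
      rw [Matrix.trace]
      rw [Finset.sum_congr rfl fun j _ => (Matrix.diag_apply P j).trans (hPdiag j)]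
      push_cast
      simp
    have h2 := trace_eq_sum_eigen hH
    rw [h1] at h2
    have h3 : ((∑ i, hH.eigenvalues i : ℝ) : ℂ) = ((n : ℝ) : ℂ) := by
      rw [Complex.ofReal_sum]; exact h2.symm
    exact_mod_cast h3
  have hprod_le : ∏ i, hH.eigenvalues i ≤ 1 := by
    have hn0 : (n : ℝ) ≠ 0 := Nat.cast_ne_zero.mpr hnpos.ne'
    have hamgm := Real.geom_mean_le_arith_mean_weighted Finset.univ
      (fun _ => 1 / (n : ℝ)) hH.eigenvalues (fun _ _ => by positivity)
      (by simp; field_simp) (fun i _ => hlam0 i)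
    have hsum : ∑ i, (1 / (n : ℝ)) * hH.eigenvalues i = 1 := by
      rw [← Finset.mul_sum, htr]; field_simp
    rw [hsum] at hamgm
    have heq : ∏ i, hH.eigenvalues i = (∏ i, hH.eigenvalues i ^ ((1 : ℝ) / n)) ^ n := by
      rw [← Finset.prod_pow]
      refine Finset.prod_congr rfl fun i _ => ?_
      rw [← Real.rpow_natCast (hH.eigenvalues i ^ ((1:ℝ) / n)) n, ← Real.rpow_mul (hlam0 i),
        one_div, inv_mul_cancel₀ hn0, Real.rpow_one]
    rw [heq]
    exact pow_le_one₀ (Finset.prod_nonneg fun i _ => Real.rpow_nonneg (hlam0 i) _) hamgm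
  have hdetP : P.det = ((‖B.det‖ ^ 2 : ℝ) : ℂ) := by
    have h1 : P.det = Bᴴ.det * B.det := by rw [hP, Matrix.det_mul]
    rw [h1, Matrix.det_conjTranspose, Complex.star_def, ← Complex.normSq_eq_conj_mul_self,
      Complex.sq_norm]
  have hdetB : ‖B.det‖ ^ 2 ≤ 1 := by
    have h2 : P.det = ((∏ i, hH.eigenvalues i : ℝ) : ℂ) := by
      rw [hH.det_eq_prod_eigenvalues, Complex.ofReal_prod]; rfl
    rw [hdetP] at h2
    have h3 : ‖B.det‖ ^ 2 = ∏ i, hH.eigenvalues i := by exact_mod_cast h2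
    rw [h3]; exact hprod_le
  rw [hdB] at hdetB
  have hppos : 0 < ∏ j, s j := Finset.prod_pos fun j _ => hspos j
  calc ‖A.det‖ ^ 2
      = ‖A.det‖ ^ 2 * (∏ j, s j)⁻¹ * (∏ j, s j) := by field_simp
    _ ≤ 1 * (∏ j, s j) := mul_le_mul_of_nonneg_right hdetB hppos.le
    _ = ∏ j, s j := one_mul _


open Matrix in
lemma mahler_disc_bound (n : ℕ) (a : Fin n → ℂ) :
    ‖∏ ij ∈ Finset.univ.filter (fun ij : Fin n × Fin n => ij.1 < ij.2),
        (a ij.1 - a ij.2) ^ 2‖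
      ≤ (n : ℝ) ^ n * ∏ i, (max 1 (‖a i‖)) ^ (2 * (n - 1)) := by
  have pairs_prod' : ∀ (f : Fin n → Fin n → ℝ),
      ∏ ij ∈ Finset.univ.filter (fun ij : Fin n × Fin n => ij.1 < ij.2), f ij.1 ij.2
        = ∏ i, ∏ j ∈ Finset.Ioi i, f i j := by
    intro f
    rw [Finset.prod_filter, ← Finset.univ_product_univ,
      Finset.prod_product' (f := fun i j => if i < j then f i j else 1)]
    refine Finset.prod_congr rfl fun i _ => ?_
    rw [← Finset.prod_filter]
    congr 1
    ext j; simp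
  have key := hadamard_sq (Matrix.vandermonde a)ᵀ
  rw [Matrix.det_transpose] at key
  have hL : ‖∏ ij ∈ Finset.univ.filter (fun ij : Fin n × Fin n => ij.1 < ij.2),
      (a ij.1 - a ij.2) ^ 2‖ = ‖(Matrix.vandermonde a).det‖ ^ 2 := by
    rw [norm_prod]
    simp_rw [norm_pow]
    rw [pairs_prod' (fun i j => ‖a i - a j‖ ^ 2)]
    rw [Matrix.det_vandermonde, norm_prod, ← Finset.prod_pow]
    refine Finset.prod_congr rfl fun i _ => ?_
    rw [norm_prod, ← Finset.prod_pow]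
    exact Finset.prod_congr rfl fun j _ => by rw [norm_sub_rev]
  have hcol : ∀ i, ∑ j, ‖(Matrix.vandermonde a)ᵀ j i‖ ^ 2
      ≤ (n : ℝ) * (max 1 (‖a i‖)) ^ (2 * (n - 1)) := by
    intro i
    have hterm : ∀ j : Fin n, ‖(Matrix.vandermonde a)ᵀ j i‖ ^ 2
        ≤ (max 1 (‖a i‖)) ^ (2 * (n - 1)) := by
      intro j
      have h1 : (Matrix.vandermonde a)ᵀ j i = a i ^ (j : ℕ) := rfl
      rw [h1, norm_pow, ← pow_mul]
      set m := max 1 (‖a i‖) with hm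
      have hm1 : (1 : ℝ) ≤ m := le_max_left _ _
      have hle : ‖a i‖ ≤ m := le_max_right _ _
      calc ‖a i‖ ^ ((j : ℕ) * 2) ≤ m ^ ((j : ℕ) * 2) :=
            pow_le_pow_left₀ (norm_nonneg _) hle _
        _ ≤ m ^ (2 * (n - 1)) := pow_le_pow_right₀ hm1 (by omega)
    calc ∑ j, ‖(Matrix.vandermonde a)ᵀ j i‖ ^ 2
        ≤ Finset.univ.card • (max 1 (‖a i‖)) ^ (2 * (n - 1)) :=
          Finset.sum_le_card_nsmul _ _ _ fun j _ => hterm j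
      _ = (n : ℝ) * (max 1 (‖a i‖)) ^ (2 * (n - 1)) := by
          rw [Finset.card_univ, Fintype.card_fin, nsmul_eq_mul]
  rw [hL]
  refine key.trans ?_
  have hmono := Finset.prod_le_prod (s := Finset.univ)
    (f := fun i => ∑ j, ‖(Matrix.vandermonde a)ᵀ j i‖ ^ 2)
    (g := fun i => (n : ℝ) * (max 1 (‖a i‖)) ^ (2 * (n - 1)))
    (fun i _ => Finset.sum_nonneg fun j _ => sq_nonneg _) (fun i _ => hcol i)
  refine hmono.trans ?_
  rw [Finset.prod_mul_distrib, Finset.prod_const, Finset.card_univ, Fintype.card_fin]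


/-- Discriminant lower bound for the translation length: with
`disc(p) = ∏_{i<j} (aᵢ - aⱼ)²` and `∏ aᵢ = 1`,
`(1/(n-1)) √(2/n) max(0, log |n⁻ⁿ disc(p)|) ≤ ℓ(p)`. -/
theorem stmt_11 (n : ℕ) (hn : 2 ≤ n) (a : Fin n → ℂ) (ha : ∏ i, a i = 1) :
    (1 / ((n : ℝ) - 1)) * Real.sqrt (2 / n) *
      max 0 (Real.log (‖
        (∏ ij ∈ Finset.univ.filter (fun ij : Fin n × Fin n => ij.1 < ij.2),
          (a ij.1 - a ij.2) ^ 2)‖ / (n : ℝ) ^ n)) ≤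
      Real.sqrt (∑ i, 2 * (Real.log ‖a i‖) ^ 2) := by
  set t : Fin n → ℝ := fun i => Real.log (‖a i‖) with ht
  set D : ℝ := ‖∏ ij ∈ Finset.univ.filter (fun ij : Fin n × Fin n => ij.1 < ij.2),
          (a ij.1 - a ij.2) ^ 2‖ with hD
  set S : ℝ := ∑ i, t i ^ 2 with hS
  have hnR : (2 : ℝ) ≤ (n : ℝ) := by exact_mod_cast hn
  have hn1 : (0 : ℝ) < (n : ℝ) - 1 := by linarith
  have hn0 : (0 : ℝ) < (n : ℝ) := by linarith
  -- each a i is nonzero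
  have hane : ∀ i, a i ≠ 0 := by
    intro i hai
    rw [Finset.prod_eq_zero (Finset.mem_univ i) hai] at ha
    exact one_ne_zero ha.symm
  have habs_pos : ∀ i, 0 < ‖a i‖ := fun i =>
    norm_pos_iff.mpr (hane i)
  -- sum of logs is zero
  have hsum0 : ∑ i, t i = 0 := by
    rw [ht]
    rw [← Real.log_prod (fun i _ => (habs_pos i).ne')]
    rw [← norm_prod, ha]
    simp
  -- log of max
  have hlogm : ∀ i, Real.log (max 1 (‖a i‖)) = max 0 (t i) := by
    intro i
    rcases le_total (‖a i‖) 1 with h | h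
    · rw [max_eq_left h, Real.log_one, eq_comm, max_eq_left]
      exact Real.log_nonpos (norm_nonneg _) h
    · rw [max_eq_right h, eq_comm, max_eq_right]
      exact Real.log_nonneg h
  -- sum of positive parts
  have hM : ∑ i, max 0 (t i) = (∑ i, |t i|) / 2 := by
    have : ∀ i, max 0 (t i) = (|t i| + t i) / 2 := by
      intro i
      rcases le_total (t i) 0 with h | h
      · rw [max_eq_left h, abs_of_nonpos h]; ring
      · rw [max_eq_right h, abs_of_nonneg h]; ring
    rw [Finset.sum_congr rfl fun i _ => this i]
    rw [← Finset.sum_div, Finset.sum_add_distrib, hsum0, add_zero]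
  -- Cauchy-Schwarz
  have hCS : ∑ i, |t i| ≤ Real.sqrt n * Real.sqrt S := by
    have h1 := Finset.sum_mul_sq_le_sq_mul_sq Finset.univ (fun _ : Fin n => (1 : ℝ))
      (fun i => |t i|)
    simp only [one_pow, one_mul, Finset.sum_const, Finset.card_univ, Fintype.card_fin,
      nsmul_eq_mul, mul_one, sq_abs] at h1
    rw [← Real.sqrt_mul hn0.le]
    refine Real.le_sqrt_of_sq_le ?_
    calc (∑ i, |t i|) ^ 2 ≤ (n : ℝ) * ∑ i, t i ^ 2 := by exact_mod_cast h1
      _ = (n : ℝ) * S := by rw [hS]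
  -- key bound on max 0 (log ...)
  have hkey : max 0 (Real.log (D / (n : ℝ) ^ n)) ≤ 2 * ((n : ℝ) - 1) * ∑ i, max 0 (t i) := by
    have hMnonneg : 0 ≤ ∑ i, max 0 (t i) :=
      Finset.sum_nonneg fun i _ => le_max_left _ _
    have hRHSnn : 0 ≤ 2 * ((n : ℝ) - 1) * ∑ i, max 0 (t i) := by positivity
    have hDnn : 0 ≤ D := by rw [hD]; exact norm_nonneg _
    rcases eq_or_lt_of_le hDnn with hD0 | hD0
    · rw [← hD0]
      simp [hRHSnn]
    · refine max_le hRHSnn ?_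
      have hnn0 : ((n : ℝ) ^ n) ≠ 0 := by positivity
      have hmah := mahler_disc_bound n a
      rw [← hD] at hmah
      have hprodpos : 0 < ∏ i, (max 1 (‖a i‖)) ^ (2 * (n - 1)) := by
        refine Finset.prod_pos fun i _ => ?_
        have : (0:ℝ) < max 1 (‖a i‖) := lt_of_lt_of_le one_pos (le_max_left _ _)
        positivity
      have hdiv : D / (n : ℝ) ^ n ≤ ∏ i, (max 1 (‖a i‖)) ^ (2 * (n - 1)) := by
        rw [div_le_iff₀ (by positivity)]
        calc D ≤ (n : ℝ) ^ n * ∏ i, (max 1 (‖a i‖)) ^ (2 * (n - 1)) := hmah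
          _ = (∏ i, (max 1 (‖a i‖)) ^ (2 * (n - 1))) * (n : ℝ) ^ n := by ring
      have hlog := Real.log_le_log (by positivity : (0:ℝ) < D / (n : ℝ) ^ n) hdiv
      refine hlog.trans ?_
      rw [Real.log_prod (fun i _ => by positivity)]
      have : ∀ i, Real.log ((max 1 (‖a i‖)) ^ (2 * (n - 1)))
          = (2 * ((n : ℝ) - 1)) * max 0 (t i) := by
        intro i
        rw [Real.log_pow, hlogm i]
        have : ((2 * (n - 1) : ℕ) : ℝ) = 2 * ((n : ℝ) - 1) := by
          push_cast [Nat.cast_sub (by omega : 1 ≤ n)]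
          ring
        rw [this]
      rw [Finset.sum_congr rfl fun i _ => this i, ← Finset.mul_sum]
  -- assemble
  have hRHS : Real.sqrt (∑ i, 2 * t i ^ 2) = Real.sqrt 2 * Real.sqrt S := by
    rw [← Finset.mul_sum, ← hS, Real.sqrt_mul (by norm_num)]
  rw [hRHS]
  have hc : 0 ≤ (1 / ((n : ℝ) - 1)) * Real.sqrt (2 / n) := by positivity
  calc (1 / ((n : ℝ) - 1)) * Real.sqrt (2 / n) * max 0 (Real.log (D / (n : ℝ) ^ n))
      ≤ (1 / ((n : ℝ) - 1)) * Real.sqrt (2 / n) * (2 * ((n : ℝ) - 1) * ∑ i, max 0 (t i)) :=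
        mul_le_mul_of_nonneg_left hkey hc
    _ = (1 / ((n : ℝ) - 1)) * Real.sqrt (2 / n) * (2 * ((n : ℝ) - 1) * ((∑ i, |t i|) / 2)) := by
        rw [hM]
    _ ≤ (1 / ((n : ℝ) - 1)) * Real.sqrt (2 / n) * (2 * ((n : ℝ) - 1) *
          ((Real.sqrt n * Real.sqrt S) / 2)) := by
        gcongr
    _ = Real.sqrt (2 / n) * Real.sqrt n * Real.sqrt S := by
        field_simp
    _ = Real.sqrt 2 * Real.sqrt S := by
        rw [← Real.sqrt_mul (by positivity) (n : ℝ)]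
        congr 1
        field_simp
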